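/- arXiv:2312.01990 — 2 statements merged into one kernel-verified Lean document; each statement's English description precedes it below -/
import Mathlib

section
/- Let d, m ≥ 1 and let G be a random m × d matrix whose entries are i.i.d. standard normal N(0,1) random variables, with rows g_1, …, g_m. For z ∈ ℝ^d define the positive random feature map φ⁺(z) = (1/√m) · exp(−‖z‖²/2) · (exp(⟨g_1, z⟩), …, exp(⟨g_m, z⟩)) ∈ ℝ^m. Then for all x, y ∈ ℝ^d, the expectation over G of ⟨φ⁺(x), φ⁺(y)⟩ equals exp(⟨x, y⟩). -/
open MeasureTheory ProbabilityTheory Real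
open scoped ENNReal NNReal

lemma gauss_pdf_smul (t u : ℝ) :
    (gaussianPDFReal 0 1 u).toNNReal • Real.exp (t * u)
      = Real.exp (t ^ 2 / 2) * gaussianPDFReal t 1 u := by
  rw [NNReal.smul_def, smul_eq_mul, Real.coe_toNNReal _ (gaussianPDFReal_nonneg 0 1 u)]
  simp only [gaussianPDFReal, NNReal.coe_one, mul_one]
  have h : Real.exp (-(u - 0) ^ 2 / 2) * Real.exp (t * u)
      = Real.exp (t ^ 2 / 2) * Real.exp (-(u - t) ^ 2 / 2) := by
    rw [← Real.exp_add, ← Real.exp_add]; congr 1; ring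
  rw [mul_assoc, h]; ring

lemma gauss_pdf_eq : gaussianPDF 0 1 = fun x => ((gaussianPDFReal 0 1 x).toNNReal : ℝ≥0∞) := by
  ext x; simp [gaussianPDF, ENNReal.ofReal]

lemma gauss_exp_integral (t : ℝ) :
    ∫ u, Real.exp (t * u) ∂(gaussianReal 0 1) = Real.exp (t ^ 2 / 2) := by
  rw [gaussianReal_of_var_ne_zero 0 one_ne_zero, gauss_pdf_eq,
    integral_withDensity_eq_integral_smul ((measurable_gaussianPDFReal 0 1).real_toNNReal)]
  simp_rw [gauss_pdf_smul]
  rw [integral_const_mul, integral_gaussianPDFReal_eq_one t one_ne_zero, mul_one]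

lemma gauss_exp_integrable (t : ℝ) :
    Integrable (fun u => Real.exp (t * u)) (gaussianReal 0 1) := by
  rw [gaussianReal_of_var_ne_zero 0 one_ne_zero, gauss_pdf_eq,
    integrable_withDensity_iff_integrable_smul ((measurable_gaussianPDFReal 0 1).real_toNNReal)]
  simp_rw [gauss_pdf_smul]
  exact (integrable_gaussianPDFReal t 1).const_mul _

lemma row_prod_eq (d : ℕ) (z : Fin d → ℝ) :
    (fun r : Fin d → ℝ => Real.exp (∑ i, r i * z i))
      = fun r => ∏ i, Real.exp (z i * r i) := by
  ext r; rw [← Real.exp_sum]; congr 1; exact Finset.sum_congr rfl fun i _ => mul_comm _ _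

/-- The law of a random `m × d` matrix (viewed as `Fin m → Fin d → ℝ`, with rows
`G 0, …, G (m-1)`) whose `m·d` entries are i.i.d. standard normal `N(0,1)`. -/
noncomputable def gaussianMatrix (m d : ℕ) : Measure (Fin m → Fin d → ℝ) :=
  Measure.pi fun _ => Measure.pi fun _ => gaussianReal 0 1

/-- Unbiasedness of positive random features for the softmax kernel (Lemma 1 of
the Performers paper): with `φ⁺(z) = (1/√m)·exp(-‖z‖²/2)·(exp(⟨g_1,z⟩), …, exp(⟨g_m,z⟩))`,
for all `x, y ∈ ℝ^d` the expectation over the Gaussian matrix `G` of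
`⟨φ⁺(x), φ⁺(y)⟩` equals `exp(⟨x, y⟩)`. -/
theorem positive_random_features_unbiased (d m : ℕ) (hd : 1 ≤ d) (hm : 1 ≤ m)
    (x y : Fin d → ℝ) :
    ∫ G, (∑ l : Fin m,
        ((1 / Real.sqrt m) * Real.exp (-(∑ i, x i ^ 2) / 2)
            * Real.exp (∑ i, G l i * x i))
        * ((1 / Real.sqrt m) * Real.exp (-(∑ i, y i ^ 2) / 2)
            * Real.exp (∑ i, G l i * y i))) ∂(gaussianMatrix m d)
      = Real.exp (∑ i, x i * y i) := by
  classical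
  letI : MeasureSpace ℝ := ⟨gaussianReal 0 1⟩
  letI : MeasureSpace (Fin d → ℝ) := ⟨Measure.pi fun _ => gaussianReal 0 1⟩
  haveI : SigmaFinite (volume : Measure ℝ) := by
    show SigmaFinite (gaussianReal 0 1); infer_instance
  haveI : IsProbabilityMeasure (volume : Measure (Fin d → ℝ)) := by
    constructor
    show Measure.pi (fun _ : Fin d => gaussianReal 0 1) Set.univ = 1
    simp [Measure.pi_univ]
  set z : Fin d → ℝ := fun i => x i + y i with hz
  set c : ℝ := ((1 / Real.sqrt m) * Real.exp (-(∑ i, x i ^ 2) / 2))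
      * ((1 / Real.sqrt m) * Real.exp (-(∑ i, y i ^ 2) / 2)) with hc
  set F : Fin m → Fin m → (Fin d → ℝ) → ℝ :=
    fun l l' r => if l' = l then c * Real.exp (∑ i, r i * z i) else 1 with hF
  have row_int : Integrable (fun r : Fin d → ℝ => c * Real.exp (∑ i, r i * z i)) volume := by
    refine Integrable.const_mul ?_ c
    show Integrable _ (Measure.pi fun _ => gaussianReal 0 1)
    rw [row_prod_eq d z]
    exact Integrable.fintype_prod (fun i => gauss_exp_integrable (z i))
  have hFint : ∀ l l', Integrable (F l l') volume := by
    intro l l'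
    by_cases h : l' = l
    · simpa [hF, h] using row_int
    · simpa [hF, h] using integrable_const (μ := (volume : Measure (Fin d → ℝ))) (1 : ℝ)
  have hsummand : ∀ (l : Fin m) (G : Fin m → Fin d → ℝ),
      ((1 / Real.sqrt m) * Real.exp (-(∑ i, x i ^ 2) / 2)
            * Real.exp (∑ i, G l i * x i))
        * ((1 / Real.sqrt m) * Real.exp (-(∑ i, y i ^ 2) / 2)
            * Real.exp (∑ i, G l i * y i))
      = ∏ l', F l l' (G l') := by
    intro l G
    rw [hF]
    simp only [Finset.prod_ite_eq', Finset.mem_univ, if_true]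
    have hsum : (∑ i, G l i * x i) + (∑ i, G l i * y i) = ∑ i, G l i * z i := by
      rw [← Finset.sum_add_distrib]
      exact Finset.sum_congr rfl fun i _ => by simp [hz, mul_add]
    rw [hc, ← hsum, Real.exp_add]; ring
  have hvol : gaussianMatrix m d = (volume : Measure (Fin m → Fin d → ℝ)) := by
    rw [gaussianMatrix, volume_pi]; rfl
  rw [hvol]
  simp_rw [hsummand]
  rw [integral_finset_sum (μ := (volume : Measure (Fin m → Fin d → ℝ))) _ (fun l _ => Integrable.fintype_prod (fun l' => hFint l l'))]
  have hval : ∀ l : Fin m, (∫ G : Fin m → Fin d → ℝ, ∏ l', F l l' (G l'))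
      = c * Real.exp ((∑ i, z i ^ 2) / 2) := by
    intro l
    rw [integral_fintype_prod_volume_eq_prod (ι := Fin m) (F l)]
    have : ∀ l', (∫ r, F l l' r) = if l' = l then c * Real.exp ((∑ i, z i ^ 2) / 2) else 1 := by
      intro l'
      by_cases h : l' = l
      · simp only [hF, h, if_true]
        rw [integral_const_mul]
        congr 1
        rw [row_prod_eq d z,
          integral_fintype_prod_volume_eq_prod (ι := Fin d) (fun i (u : ℝ) => Real.exp (z i * u))]
        have : ∀ i : Fin d, (∫ u : ℝ, Real.exp (z i * u)) = Real.exp (z i ^ 2 / 2) :=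
          fun i => gauss_exp_integral (z i)
        simp_rw [this]
        rw [← Real.exp_sum, Finset.sum_div]
      · simp [hF, h]
    simp_rw [this]
    simp [Finset.prod_ite_eq', Finset.mem_univ]
  simp_rw [hval]
  rw [Finset.sum_const, Finset.card_univ, Fintype.card_fin, nsmul_eq_mul]
  have hm0 : (0 : ℝ) < m := by exact_mod_cast hm
  have hsq : (1 / Real.sqrt m) * (1 / Real.sqrt m) = 1 / m := by
    rw [div_mul_div_comm, one_mul, Real.mul_self_sqrt hm0.le]
  have hzsum : (∑ i, z i ^ 2) = (∑ i, x i ^ 2) + 2 * (∑ i, x i * y i) + (∑ i, y i ^ 2) := by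
    simp_rw [hz]
    rw [Finset.mul_sum, ← Finset.sum_add_distrib, ← Finset.sum_add_distrib]
    exact Finset.sum_congr rfl fun i _ => by ring
  have key : c * Real.exp ((∑ i, z i ^ 2) / 2) = (1 / m) * Real.exp (∑ i, x i * y i) := by
    rw [hc, hzsum,
      show ((1 / Real.sqrt m) * Real.exp (-(∑ i, x i ^ 2) / 2))
          * ((1 / Real.sqrt m) * Real.exp (-(∑ i, y i ^ 2) / 2))
          * Real.exp (((∑ i, x i ^ 2) + 2 * (∑ i, x i * y i) + (∑ i, y i ^ 2)) / 2)
        = ((1 / Real.sqrt m) * (1 / Real.sqrt m))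
          * (Real.exp (-(∑ i, x i ^ 2) / 2) * Real.exp (-(∑ i, y i ^ 2) / 2)
            * Real.exp (((∑ i, x i ^ 2) + 2 * (∑ i, x i * y i) + (∑ i, y i ^ 2)) / 2)) from by
        ring,
      hsq, ← Real.exp_add, ← Real.exp_add]
    congr 1
    ring
  rw [key]
  field_simp
end

section
/- Let d, m ≥ 1 and let G be a random m × d matrix whose entries are i.i.d. standard normal N(0,1) random variables, with rows g_1, …, g_m. For z ∈ ℝ^d define the positive random feature map φ⁺(z) = (1/√m) · exp(−‖z‖²/2) · (exp(⟨g_1, z⟩), …, exp(⟨g_m, z⟩)) ∈ ℝ^m. Then for all x, y ∈ ℝ^d, the variance over G of the estimator K̂(x,y) = ⟨φ⁺(x), φ⁺(y)⟩ equals (1/m) · exp(−(‖x‖² + ‖y‖²)) · (exp(2‖z‖²) − exp(‖z‖²)), where z = x + y. -/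
open MeasureTheory ProbabilityTheory Real
open scoped ENNReal NNReal

section Helpers
set_option linter.unusedSectionVars false

lemma gaussDensityEq : gaussianReal 0 1
    = MeasureTheory.volume.withDensity (fun x => ((gaussianPDFReal 0 1 x).toNNReal : ℝ≥0∞)) := by
  rw [gaussianReal_of_var_ne_zero 0 one_ne_zero]; rfl

lemma gaussKey (t x : ℝ) :
    (((gaussianPDFReal 0 1 x).toNNReal : ℝ≥0) : ℝ) * Real.exp (x * t)
      = Real.exp (t ^ 2 / 2) * gaussianPDFReal t 1 x := by
  rw [Real.coe_toNNReal _ (gaussianPDFReal_nonneg 0 1 x)]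
  simp only [gaussianPDFReal, NNReal.coe_one, mul_one]
  rw [mul_assoc, ← Real.exp_add, mul_left_comm, ← Real.exp_add]
  congr 2
  ring

lemma integrable_exp_mul_gauss (t : ℝ) :
    Integrable (fun x => Real.exp (x * t)) (gaussianReal 0 1) := by
  rw [gaussDensityEq, integrable_withDensity_iff_integrable_smul
    ((measurable_gaussianPDFReal 0 1).real_toNNReal)]
  have : (fun x => ((gaussianPDFReal 0 1 x).toNNReal : ℝ≥0) • Real.exp (x * t))
      = fun x => Real.exp (t ^ 2 / 2) * gaussianPDFReal t 1 x := by
    funext u; rw [NNReal.smul_def, smul_eq_mul, gaussKey]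
  rw [this]
  exact (integrable_gaussianPDFReal t 1).const_mul _

lemma integral_exp_mul_gauss (t : ℝ) :
    ∫ x, Real.exp (x * t) ∂(gaussianReal 0 1) = Real.exp (t ^ 2 / 2) := by
  rw [gaussDensityEq, integral_withDensity_eq_integral_smul
    ((measurable_gaussianPDFReal 0 1).real_toNNReal)]
  simp_rw [NNReal.smul_def, smul_eq_mul, gaussKey]
  rw [MeasureTheory.integral_const_mul, integral_gaussianPDFReal_eq_one t one_ne_zero, mul_one]


variable {ι : Type*} [Fintype ι] {E : Type*} [MeasurableSpace E]
  (μ : Measure E) [IsProbabilityMeasure μ]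

lemma integrable_pi_prod (f : ι → E → ℝ) (hf : ∀ i, Integrable (f i) μ) :
    Integrable (fun x : ι → E => ∏ i, f i (x i)) (Measure.pi fun _ => μ) := by
  letI : MeasureSpace E := ⟨μ⟩
  haveI : SigmaFinite (volume : Measure E) := inferInstanceAs (SigmaFinite μ)
  exact Integrable.fintype_prod hf

lemma integral_pi_prod (f : ι → E → ℝ) :
    ∫ x : ι → E, ∏ i, f i (x i) ∂(Measure.pi fun _ => μ) = ∏ i, ∫ u, f i u ∂μ := by
  letI : MeasureSpace E := ⟨μ⟩
  haveI : SigmaFinite (volume : Measure E) := inferInstanceAs (SigmaFinite μ)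
  exact integral_fintype_prod_eq_prod f

variable [DecidableEq ι]

lemma prod_eval_one (f : E → ℝ) (l : ι) (x : ι → E) :
    (∏ j, (if j = l then f else fun _ => (1:ℝ)) (x j)) = f (x l) := by
  have h : ∀ j, (if j = l then f else fun _ => (1:ℝ)) (x j)
      = if j = l then f (x j) else 1 := fun j => by split <;> rfl
  simp_rw [h]
  rw [Finset.prod_ite_eq' Finset.univ l (fun j => f (x j))]
  simp

lemma integrable_eval (f : E → ℝ) (hf : Integrable f μ) (l : ι) :
    Integrable (fun x : ι → E => f (x l)) (Measure.pi fun _ => μ) := by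
  have h := integrable_pi_prod μ (fun j => if j = l then f else fun _ => (1:ℝ))
    (fun j => by split; exacts [hf, by simp])
  apply h.congr
  filter_upwards with x
  exact prod_eval_one f l x

lemma integral_eval (f : E → ℝ) (l : ι) :
    ∫ x : ι → E, f (x l) ∂(Measure.pi fun _ => μ) = ∫ u, f u ∂μ := by
  have h := integral_pi_prod μ (fun j => if j = l then f else fun _ => (1:ℝ))
  simp only [prod_eval_one] at h
  have h2 : ∀ i : ι, ∫ u, (if i = l then f else fun _ => (1:ℝ)) u ∂μ
      = if i = l then ∫ u, f u ∂μ else 1 := fun i => by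
    split
    · rfl
    · simp
  simp_rw [h2] at h
  rw [h, Finset.prod_ite_eq' Finset.univ l (fun _ => ∫ u, f u ∂μ)]
  simp

lemma prod_eval_two (f g : E → ℝ) {l k : ι} (hlk : l ≠ k) (x : ι → E) :
    (∏ j, (if j = l then f else if j = k then g else fun _ => (1:ℝ)) (x j))
      = f (x l) * g (x k) := by
  classical
  rw [← Finset.mul_prod_erase Finset.univ _ (Finset.mem_univ l),
    ← Finset.mul_prod_erase _ _ (Finset.mem_erase.2 ⟨Ne.symm hlk, Finset.mem_univ k⟩),
    Finset.prod_eq_one]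
  · simp [Ne.symm hlk, hlk]
  · intro j hj
    simp only [Finset.mem_erase] at hj
    simp [hj.1, hj.2.1]

lemma integrable_eval_two (f g : E → ℝ) (hf : Integrable f μ) (hg : Integrable g μ)
    {l k : ι} (hlk : l ≠ k) :
    Integrable (fun x : ι → E => f (x l) * g (x k)) (Measure.pi fun _ => μ) := by
  have h := integrable_pi_prod μ
    (fun j => if j = l then f else if j = k then g else fun _ => (1:ℝ))
    (fun j => by
      split
      · exact hf
      split
      · exact hg
      · simp)
  apply h.congr
  filter_upwards with x
  exact prod_eval_two f g hlk x

lemma integral_eval_two (f g : E → ℝ) {l k : ι} (hlk : l ≠ k) :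
    ∫ x : ι → E, f (x l) * g (x k) ∂(Measure.pi fun _ => μ)
      = (∫ u, f u ∂μ) * ∫ u, g u ∂μ := by
  have h := integral_pi_prod μ (fun j => if j = l then f else if j = k then g else fun _ => (1:ℝ))
  simp only [prod_eval_two f g hlk] at h
  have h2 : ∀ i : ι, ∫ u, (if i = l then f else if i = k then g else fun _ => (1:ℝ)) u ∂μ
      = if i = l then ∫ u, f u ∂μ else if i = k then ∫ u, g u ∂μ else 1 := fun i => by
    split
    · rfl
    split
    · rfl
    · simp
  simp_rw [h2] at h
  rw [h, ← Finset.mul_prod_erase Finset.univ _ (Finset.mem_univ l),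
    ← Finset.mul_prod_erase _ _ (Finset.mem_erase.2 ⟨Ne.symm hlk, Finset.mem_univ k⟩),
    Finset.prod_eq_one]
  · simp [Ne.symm hlk, hlk]
  · intro j hj
    simp only [Finset.mem_erase] at hj
    simp [hj.1, hj.2.1]

lemma integrable_exp_inner {d : ℕ} (z : Fin d → ℝ) :
    Integrable (fun v : Fin d → ℝ => Real.exp (∑ i, v i * z i))
      (Measure.pi fun _ : Fin d => gaussianReal 0 1) := by
  have h := integrable_pi_prod (gaussianReal 0 1)
    (fun (i : Fin d) (u : ℝ) => Real.exp (u * z i))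
    (fun i => integrable_exp_mul_gauss (z i))
  apply h.congr
  filter_upwards with v
  rw [← Real.exp_sum]

lemma integral_exp_inner {d : ℕ} (z : Fin d → ℝ) :
    ∫ v, Real.exp (∑ i, v i * z i) ∂(Measure.pi fun _ : Fin d => gaussianReal 0 1)
      = Real.exp ((∑ i, z i ^ 2) / 2) := by
  simp_rw [Real.exp_sum]
  rw [integral_pi_prod (gaussianReal 0 1) (fun (i : Fin d) (u : ℝ) => Real.exp (u * z i))]
  simp_rw [integral_exp_mul_gauss]
  rw [← Real.exp_sum, Finset.sum_div]

end Helpers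

/-- Variance of the positive random feature estimator of the softmax kernel
(Lemma 2 of the Performers paper): with
`φ⁺(z) = (1/√m)·exp(-‖z‖²/2)·(exp(⟨g_1,z⟩), …, exp(⟨g_m,z⟩))`, for all
`x, y ∈ ℝ^d`, the variance over `G` of `K̂(x,y) = ⟨φ⁺(x), φ⁺(y)⟩` equals
`(1/m)·exp(-(‖x‖² + ‖y‖²))·(exp(2‖x+y‖²) - exp(‖x+y‖²))`. -/
theorem positive_random_features_variance (d m : ℕ) (hd : 1 ≤ d) (hm : 1 ≤ m)
    (x y : Fin d → ℝ) :
    ProbabilityTheory.variance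
      (fun G => ∑ l : Fin m,
        ((1 / Real.sqrt m) * Real.exp (-(∑ i, x i ^ 2) / 2)
            * Real.exp (∑ i, G l i * x i))
        * ((1 / Real.sqrt m) * Real.exp (-(∑ i, y i ^ 2) / 2)
            * Real.exp (∑ i, G l i * y i)))
      (gaussianMatrix m d)
      = (1 / m) * Real.exp (-((∑ i, x i ^ 2) + (∑ i, y i ^ 2)))
        * (Real.exp (2 * ∑ i, (x i + y i) ^ 2)
            - Real.exp (∑ i, (x i + y i) ^ 2)) := by
  classical
  have hm0 : (m : ℝ) ≠ 0 := Nat.cast_ne_zero.2 (by omega)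
  set μ1 : Measure (Fin d → ℝ) := Measure.pi fun _ => gaussianReal 0 1 with hμ1
  have hGM : gaussianMatrix m d = Measure.pi fun _ : Fin m => μ1 := rfl
  haveI : IsProbabilityMeasure μ1 := by rw [hμ1]; infer_instance
  haveI : IsProbabilityMeasure (gaussianMatrix m d) := by rw [hGM]; infer_instance
  set z : Fin d → ℝ := fun i => x i + y i with hzdef
  have hxy : ∀ i, x i + y i = z i := fun i => rfl
  simp_rw [hxy]
  set Sx : ℝ := ∑ i, x i ^ 2 with hSx
  set Sy : ℝ := ∑ i, y i ^ 2 with hSy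
  set Sz : ℝ := ∑ i, z i ^ 2 with hSzdef
  set f : (Fin d → ℝ) → ℝ := fun v => Real.exp (∑ i, v i * z i) with hfdef
  set C : ℝ := (1 / m) * Real.exp (-(Sx + Sy) / 2) with hCdef
  -- rewrite the estimator
  have hEst : (fun G : Fin m → Fin d → ℝ => ∑ l,
        ((1 / Real.sqrt m) * Real.exp (-Sx / 2) * Real.exp (∑ i, G l i * x i))
        * ((1 / Real.sqrt m) * Real.exp (-Sy / 2) * Real.exp (∑ i, G l i * y i)))
      = fun G => C * ∑ l, f (G l) := by
    funext G
    rw [Finset.mul_sum]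
    refine Finset.sum_congr rfl fun l _ => ?_
    have h1 : Real.exp (∑ i, G l i * x i) * Real.exp (∑ i, G l i * y i) = f (G l) := by
      rw [hfdef]
      dsimp only
      rw [← Real.exp_add, ← Finset.sum_add_distrib]
      congr 1
      exact Finset.sum_congr rfl fun i _ => by
        show G l i * x i + G l i * y i = G l i * (x i + y i); ring
    have h2 : (1 / Real.sqrt m : ℝ) * (1 / Real.sqrt m) = 1 / m := by
      rw [div_mul_div_comm, one_mul, Real.mul_self_sqrt (Nat.cast_nonneg m)]
    have h3 : Real.exp (-Sx / 2) * Real.exp (-Sy / 2) = Real.exp (-(Sx + Sy) / 2) := by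
      rw [← Real.exp_add]; congr 1; ring
    calc ((1 / Real.sqrt m) * Real.exp (-Sx / 2) * Real.exp (∑ i, G l i * x i))
        * ((1 / Real.sqrt m) * Real.exp (-Sy / 2) * Real.exp (∑ i, G l i * y i))
        = ((1 / Real.sqrt m : ℝ) * (1 / Real.sqrt m))
            * (Real.exp (-Sx / 2) * Real.exp (-Sy / 2))
            * (Real.exp (∑ i, G l i * x i) * Real.exp (∑ i, G l i * y i)) := by ring
      _ = C * f (G l) := by rw [h1, h2, h3, hCdef]
  rw [hEst, hGM]
  rw [show (fun G : Fin m → Fin d → ℝ => C * ∑ l, f (G l))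
      = C • fun G : Fin m → Fin d → ℝ => ∑ l, f (G l) from rfl, variance_smul]
  -- basic integrals
  have hfint : Integrable f μ1 := integrable_exp_inner z
  have hEf : ∫ u, f u ∂μ1 = Real.exp (Sz / 2) := integral_exp_inner z
  set f2 : (Fin d → ℝ) → ℝ := fun v => Real.exp (∑ i, v i * (2 * z i)) with hf2def
  have hfsq : ∀ v, f v * f v = f2 v := by
    intro v
    rw [hfdef, hf2def]
    dsimp only
    rw [← Real.exp_add, ← Finset.sum_add_distrib]
    congr 1
    exact Finset.sum_congr rfl fun i _ => by ring
  have hf2int : Integrable f2 μ1 := integrable_exp_inner _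
  have hEf2 : ∫ u, f2 u ∂μ1 = Real.exp (2 * Sz) := by
    rw [hf2def]
    rw [integral_exp_inner (fun i => 2 * z i)]
    have h4 : ∑ i, (2 * z i) ^ 2 = 4 * Sz := by
      rw [hSzdef, Finset.mul_sum]
      exact Finset.sum_congr rfl fun i _ => by ring
    rw [h4]
    congr 1
    ring
  -- integrability over the matrix measure
  set S : (Fin m → Fin d → ℝ) → ℝ := fun G => ∑ l, f (G l) with hSdef
  have hIl : ∀ l : Fin m, Integrable (fun G : Fin m → Fin d → ℝ => f (G l))
      (Measure.pi fun _ : Fin m => μ1) := fun l => integrable_eval μ1 f hfint l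
  have hS_int : Integrable S (Measure.pi fun _ : Fin m => μ1) :=
    integrable_finset_sum _ fun l _ => hIl l
  have htermint : ∀ l k : Fin m, Integrable (fun G : Fin m → Fin d → ℝ => f (G l) * f (G k))
      (Measure.pi fun _ : Fin m => μ1) := by
    intro l k
    by_cases h : l = k
    · subst h
      exact (integrable_eval μ1 f2 hf2int l).congr
        (by filter_upwards with G; exact (hfsq (G l)).symm)
    · exact integrable_eval_two μ1 f f hfint hfint h
  have hterm : ∀ l k : Fin m, ∫ G : Fin m → Fin d → ℝ, f (G l) * f (G k)
      ∂(Measure.pi fun _ : Fin m => μ1)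
      = if l = k then Real.exp (2 * Sz) else Real.exp Sz := by
    intro l k
    by_cases h : l = k
    · subst h
      rw [if_pos rfl]
      rw [show (fun G : Fin m → Fin d → ℝ => f (G l) * f (G l))
          = fun G : Fin m → Fin d → ℝ => f2 (G l) from funext fun G => hfsq (G l)]
      rw [integral_eval μ1 f2 l, hEf2]
    · rw [if_neg h, integral_eval_two μ1 f f h, hEf]
      rw [← Real.exp_add]
      congr 1
      ring
  have hSsq : S ^ 2 = fun G : Fin m → Fin d → ℝ => ∑ l, ∑ k, f (G l) * f (G k) := by
    funext G
    rw [Pi.pow_apply, hSdef, pow_two]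
    exact Finset.sum_mul_sum _ _ _ _
  have hS2_int : Integrable (S ^ 2) (Measure.pi fun _ : Fin m => μ1) := by
    rw [hSsq]
    exact integrable_finset_sum _ fun l _ => integrable_finset_sum _ fun k _ => htermint l k
  have hS_memLp : MemLp S 2 (Measure.pi fun _ : Fin m => μ1) :=
    (memLp_two_iff_integrable_sq hS_int.aestronglyMeasurable).2 hS2_int
  rw [variance_eq_sub hS_memLp]
  -- first moment
  have hES : ∫ G, S G ∂(Measure.pi fun _ : Fin m => μ1) = m * Real.exp (Sz / 2) := by
    rw [hSdef]
    rw [integral_finset_sum _ fun l _ => hIl l]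
    simp_rw [integral_eval μ1 f, hEf]
    rw [Finset.sum_const, Finset.card_univ, Fintype.card_fin, nsmul_eq_mul]
  -- second moment
  have hES2 : ∫ G, (S ^ 2) G ∂(Measure.pi fun _ : Fin m => μ1)
      = m * Real.exp (2 * Sz) + (m * (m - 1)) * Real.exp Sz := by
    rw [hSsq]
    rw [integral_finset_sum _ fun l _ => integrable_finset_sum _ fun k _ => htermint l k]
    have : ∀ l : Fin m, ∫ G : Fin m → Fin d → ℝ, (∑ k, f (G l) * f (G k))
        ∂(Measure.pi fun _ : Fin m => μ1)
        = Real.exp (2 * Sz) + ((m : ℝ) - 1) * Real.exp Sz := by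
      intro l
      rw [integral_finset_sum _ fun k _ => htermint l k]
      simp_rw [hterm l]
      simp_rw [show ∀ k : Fin m, (if l = k then Real.exp (2 * Sz) else Real.exp Sz)
          = Real.exp Sz + (if l = k then Real.exp (2 * Sz) - Real.exp Sz else 0) from
        fun k => by split <;> ring,
        Finset.sum_add_distrib, Finset.sum_ite_eq, Finset.sum_const, Finset.card_univ,
        Fintype.card_fin, nsmul_eq_mul, if_pos (Finset.mem_univ l)]
      ring
    simp_rw [this]
    rw [Finset.sum_const, Finset.card_univ, Fintype.card_fin, nsmul_eq_mul]
    ring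
  rw [hES, hES2]
  -- final arithmetic
  rw [hCdef]
  have hExpSq : Real.exp (-(Sx + Sy) / 2) ^ 2 = Real.exp (-(Sx + Sy)) := by
    rw [pow_two, ← Real.exp_add]; congr 1; ring
  have hESq : Real.exp (Sz / 2) ^ 2 = Real.exp Sz := by
    rw [pow_two, ← Real.exp_add]; congr 1; ring
  rw [mul_pow, hExpSq, mul_pow, hESq]
  field_simp
  ring
end
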